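/- Let n : ℕ and let A be a real symmetric positive semidefinite n × n matrix. Then Real.log (Matrix.det (1 + A)) ≤ Matrix.trace A, where 1 denotes the identity matrix. -/

import Mathlib

/-- **log-det–trace inequality.** For a real symmetric positive semidefinite matrix
`A`, `log det (1 + A) ≤ trace A`. -/
theorem log_det_one_add_le_trace (n : ℕ) (A : Matrix (Fin n) (Fin n) ℝ)
    (hA : A.PosSemidef) :
    Real.log (Matrix.det (1 + A)) ≤ Matrix.trace A := by
  have h1 : (1 + A).PosDef := Matrix.PosDef.add_posSemidef Matrix.PosDef.one hA
  have hH := h1.isHermitian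
  have hpos : ∀ i, 0 < hH.eigenvalues i := h1.eigenvalues_pos
  have hdet : Matrix.det (1 + A) = ∏ i, hH.eigenvalues i := by
    simpa using hH.det_eq_prod_eigenvalues
  have htr : Matrix.trace (1 + A) = ∑ i, hH.eigenvalues i := by
    conv_lhs => rw [hH.spectral_theorem]
    rw [Unitary.conjStarAlgAut_apply, Matrix.trace_mul_cycle]
    simp [Unitary.coe_star_mul_self, Matrix.trace_diagonal]
  have hlog : Real.log (Matrix.det (1 + A)) = ∑ i, Real.log (hH.eigenvalues i) := by
    rw [hdet, Real.log_prod]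
    exact fun i _ => (hpos i).ne'
  have hkey : ∑ i, Real.log (hH.eigenvalues i) ≤ ∑ i, (hH.eigenvalues i - 1) :=
    Finset.sum_le_sum fun i _ => by
      have := Real.log_le_sub_one_of_pos (hpos i)
      linarith
  have htrA : Matrix.trace A = ∑ i, (hH.eigenvalues i - 1) := by
    have : Matrix.trace (1 + A) = Matrix.trace (1 : Matrix (Fin n) (Fin n) ℝ) + Matrix.trace A := by
      simp [Matrix.trace_add]
    rw [Finset.sum_sub_distrib, ← htr, this]
    simp [Matrix.trace_one]
  rw [hlog, htrA]
  exact hkey
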